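/- arXiv:2109.05389 — 2 statements merged into one kernel-verified Lean document; each statement's English description precedes it below -/
import Mathlib

section
/- Let ℓ : ℝ → ℝ be convex and let I = [c,d] be a closed interval such that inf_{t ∈ I} ℓ(t) ≤ inf_{t ∈ ℝ} ℓ(t) + ε. Then for every t ∈ ℝ, ℓ(clip(t, I)) ≤ ℓ(t) + ε. -/
/-- Helper: if `ℓ p ≤ max (ℓ s) (ℓ t)` for all `s ∈ [c,d]`, and the interval contains an
ε-approximate minimizer, then `ℓ p ≤ ℓ t + ε`. -/
lemma clip_aux (ℓ : ℝ → ℝ) (c d ε t p : ℝ) (hcd : c ≤ d) (hε : 0 ≤ ε)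
    (hopt : ∀ s : ℝ, sInf (ℓ '' Set.Icc c d) ≤ ℓ s + ε)
    (hmax : ∀ s ∈ Set.Icc c d, ℓ p ≤ max (ℓ s) (ℓ t)) :
    ℓ p ≤ ℓ t + ε := by
  by_cases h : ℓ p ≤ ℓ t
  · linarith
  · push_neg at h
    have hlb : ℓ p ≤ sInf (ℓ '' Set.Icc c d) := by
      apply le_csInf
      · exact (Set.nonempty_Icc.2 hcd).image ℓ
      · rintro y ⟨s, hs, rfl⟩
        rcases max_cases (ℓ s) (ℓ t) with ⟨heq, _⟩ | ⟨heq, _⟩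
        · have := hmax s hs; rw [heq] at this; exact this
        · have := hmax s hs; rw [heq] at this; linarith
    exact hlb.trans (hopt t)

/-- If `ℓ` is convex and the interval `[c,d]` contains an `ε`-approximate minimizer of `ℓ`
(`inf_{t ∈ [c,d]} ℓ(t) ≤ inf_{t ∈ ℝ} ℓ(t) + ε`), then `ℓ(clip(t,[c,d])) ≤ ℓ(t) + ε` for all `t`. -/
theorem clip_loss_le (ℓ : ℝ → ℝ) (hconv : ConvexOn ℝ Set.univ ℓ)
    (c d ε : ℝ) (hcd : c ≤ d) (hε : 0 ≤ ε)
    (hopt : ∀ s : ℝ, sInf (ℓ '' Set.Icc c d) ≤ ℓ s + ε) :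
    ∀ t : ℝ, ℓ (max c (min t d)) ≤ ℓ t + ε := by
  intro t
  rcases le_or_gt t c with htc | hct
  · -- t ≤ c : clip = c
    have hmin : min t d = t := min_eq_left (htc.trans hcd)
    have hmaxc : max c (min t d) = c := by rw [hmin]; exact max_eq_left htc
    rw [hmaxc]
    apply clip_aux ℓ c d ε t c hcd hε hopt
    intro s hs
    have hc_seg : c ∈ segment ℝ t s := by
      rw [segment_eq_Icc (htc.trans hs.1)]
      exact ⟨htc, hs.1⟩
    exact (hconv.le_on_segment (Set.mem_univ t) (Set.mem_univ s) hc_seg).trans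
      (by rw [max_comm])
  · rcases le_or_gt d t with hdt | htd
    · -- d ≤ t : clip = d
      have hmin : min t d = d := min_eq_right hdt
      have hmaxc : max c (min t d) = d := by rw [hmin]; exact max_eq_right hcd
      rw [hmaxc]
      apply clip_aux ℓ c d ε t d hcd hε hopt
      intro s hs
      have hd_seg : d ∈ segment ℝ s t := by
        rw [segment_eq_Icc (hs.2.trans hdt)]
        exact ⟨hs.2, hdt⟩
      exact hconv.le_on_segment (Set.mem_univ s) (Set.mem_univ t) hd_seg
    · -- c < t < d : clip = t
      have : max c (min t d) = t := by
        rw [min_eq_left htd.le]; exact max_eq_right hct.le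
      rw [this]; linarith
end

section
/- Suppose a partition S of X is α-approximately multicalibrated for a function class C under D (Σ_i D(S_i)·|Cov_{D_i}[c(x),y]| ≤ α for all c ∈ C) and that the indicator of a subset X' ⊆ X lies in C with D(X') > 0. Let p_i = E_{D_i}[y] and p'_i = E[y | x ∈ S_i ∩ X']. Then Σ_i D(S_i ∩ X')·|p_i − p'_i| ≤ α. -/
open Finset

variable {X : Type*} [Fintype X] [DecidableEq X] {m : ℕ}

/-- Probability mass `D(S_i)` of state `i` of the partition given by `σ`. -/
noncomputable def smass (D : X → Bool → ℝ) (σ : X → Fin m) (i : Fin m) : ℝ :=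
  ∑ x, ∑ b, if σ x = i then D x b else 0

/-- Conditional expectation `E_{D_i}[F(x,y)]` on state `i`. -/
noncomputable def sexp (D : X → Bool → ℝ) (σ : X → Fin m) (i : Fin m)
    (F : X → Bool → ℝ) : ℝ :=
  (∑ x, ∑ b, if σ x = i then D x b * F x b else 0) / smass D σ i

/-- Conditional covariance `Cov_{D_i}[c(x), y]` on state `i`. -/
noncomputable def scov (D : X → Bool → ℝ) (σ : X → Fin m) (i : Fin m) (c : X → ℝ) : ℝ :=
  sexp D σ i (fun x b => c x * (if b then 1 else 0))
    - sexp D σ i (fun x _ => c x) * sexp D σ i (fun _ b => if b then 1 else 0)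

/-- `p_i = E_{D_i}[y]`. -/
noncomputable def pstate (D : X → Bool → ℝ) (σ : X → Fin m) (i : Fin m) : ℝ :=
  sexp D σ i (fun _ b => if b then 1 else 0)

/-- Mass of `S_i ∩ X'`. -/
noncomputable def massInt (D : X → Bool → ℝ) (σ : X → Fin m) (X' : Finset X)
    (i : Fin m) : ℝ :=
  ∑ x, ∑ b, if σ x = i ∧ x ∈ X' then D x b else 0

/-- `p'_i = E[y | x ∈ S_i ∩ X']`. -/
noncomputable def pstateInt (D : X → Bool → ℝ) (σ : X → Fin m) (X' : Finset X)
    (i : Fin m) : ℝ :=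
  (∑ x, if σ x = i ∧ x ∈ X' then D x true else 0) / massInt D σ X' i

/-- If a partition is `α`-approximately multicalibrated for a class `C` containing the
indicator of a subset `X'` with `D(X') > 0`, then `Σ_i D(S_i ∩ X')·|p_i − p'_i| ≤ α`. -/
theorem multicalibration_subset_means {X : Type*} [Fintype X] [DecidableEq X] {m : ℕ}
    (D : X → Bool → ℝ) (hD : ∀ x b, 0 ≤ D x b) (hD1 : ∑ x, ∑ b, D x b = 1)
    (σ : X → Fin m) (C : Set (X → ℝ)) (α : ℝ) (X' : Finset X)
    (hmc : ∀ c ∈ C, ∑ i, smass D σ i * |scov D σ i c| ≤ α)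
    (hind : (fun x => if x ∈ X' then (1:ℝ) else 0) ∈ C)
    (hpos : 0 < ∑ x ∈ X', ∑ b, D x b) :
    ∑ i, massInt D σ X' i * |pstate D σ i - pstateInt D σ X' i| ≤ α := by
  have key : ∀ i, massInt D σ X' i * |pstate D σ i - pstateInt D σ X' i|
      = smass D σ i * |scov D σ i (fun x => if x ∈ X' then (1:ℝ) else 0)| := by
    intro i
    set M := smass D σ i with hM
    set N := massInt D σ X' i with hN
    set A : ℝ := ∑ x, if σ x = i ∧ x ∈ X' then D x true else 0 with hA
    set T : ℝ := ∑ x, if σ x = i then D x true else 0 with hT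
    have hMnn : 0 ≤ M := Finset.sum_nonneg fun x _ => Finset.sum_nonneg fun b _ => by
      by_cases h : σ x = i <;> simp [h, hD x b]
    have hNnn : 0 ≤ N := Finset.sum_nonneg fun x _ => Finset.sum_nonneg fun b _ => by
      by_cases h : σ x = i ∧ x ∈ X' <;> simp [h, hD x b]
    have hAnn : 0 ≤ A := Finset.sum_nonneg fun x _ => by
      by_cases h : σ x = i ∧ x ∈ X' <;> simp [h, hD x true]
    have hNleM : N ≤ M := by
      apply Finset.sum_le_sum; intro x _; apply Finset.sum_le_sum; intro b _
      by_cases h1 : σ x = i <;> by_cases h2 : x ∈ X' <;> simp [h1, h2, hD x b]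
    have hAleN : A ≤ N := by
      apply Finset.sum_le_sum; intro x _
      rw [Fintype.sum_bool]
      by_cases h : σ x = i ∧ x ∈ X' <;> simp [h, hD x false, hD x true]
    -- numerator computations
    have num1 : (∑ x, ∑ b, if σ x = i then D x b * (if b then (1:ℝ) else 0) else 0) = T := by
      apply Finset.sum_congr rfl; intro x _
      rw [Fintype.sum_bool]
      by_cases h : σ x = i <;> simp [h]
    have num2 : (∑ x, ∑ b, if σ x = i then
        D x b * ((fun x => if x ∈ X' then (1:ℝ) else 0) x) else 0) = N := by
      rw [hN, massInt]
      apply Finset.sum_congr rfl; intro x _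
      apply Finset.sum_congr rfl; intro b _
      by_cases h1 : σ x = i <;> by_cases h2 : x ∈ X' <;> simp [h1, h2]
    have num3 : (∑ x, ∑ b, if σ x = i then
        D x b * ((if x ∈ X' then (1:ℝ) else 0) * (if b then (1:ℝ) else 0)) else 0) = A := by
      apply Finset.sum_congr rfl; intro x _
      rw [Fintype.sum_bool]
      by_cases h1 : σ x = i <;> by_cases h2 : x ∈ X' <;> simp [h1, h2]
    have hps : pstate D σ i = T / M := by rw [pstate, sexp, num1]
    have hpsi : pstateInt D σ X' i = A / N := by rw [pstateInt]
    have hcov : scov D σ i (fun x => if x ∈ X' then (1:ℝ) else 0)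
        = A / M - (N / M) * (T / M) := by
      rw [scov, sexp, sexp, sexp, num1, num2, num3]
    rw [hps, hpsi, hcov]
    by_cases hM0 : M = 0
    · have hN0 : N = 0 := le_antisymm (hM0 ▸ hNleM) hNnn
      simp [hM0, hN0]
    · have hMp : 0 < M := lt_of_le_of_ne hMnn (Ne.symm hM0)
      by_cases hN0 : N = 0
      · have hA0 : A = 0 := le_antisymm (hN0 ▸ hAleN) hAnn
        simp [hN0, hA0]
      · have hNp : 0 < N := lt_of_le_of_ne hNnn (Ne.symm hN0)
        have hid : M * (A / M - N / M * (T / M)) = -(N * (T / M - A / N)) := by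
          field_simp; ring
        calc N * |T / M - A / N| = |N * (T / M - A / N)| := by
              rw [abs_mul, abs_of_pos hNp]
          _ = |M * (A / M - N / M * (T / M))| := by rw [hid, abs_neg]
          _ = M * |A / M - N / M * (T / M)| := by rw [abs_mul, abs_of_pos hMp]
  calc ∑ i, massInt D σ X' i * |pstate D σ i - pstateInt D σ X' i|
      = ∑ i, smass D σ i * |scov D σ i (fun x => if x ∈ X' then (1:ℝ) else 0)| := by
        exact Finset.sum_congr rfl fun i _ => key i
    _ ≤ α := hmc _ hind
end
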